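/- Let n_1,…,n_d ≥ 1 be real numbers, l > 0 a real number, c_1,…,c_{2m} < 0 with Σ_{i=1}^{2m} c_i = −l, and let A : ({1,…,d})^{2m} → ℝ be a function such that for every i ∈ {1,…,2m} and every j ∈ {1,…,d}, the sum over all other indices of |A| with the i-th index fixed to j is at most K. Then |Σ_{j ∈ [1:d]^{2m}} n_{j_1}^{c_1} ⋯ n_{j_{2m}}^{c_{2m}} A(j)| ≤ K · Σ_{j=1}^d n_j^{−l}. -/

import Mathlib

open Finset

theorem weighted_sum_bound
    (d m : ℕ) (n : Fin d → ℝ) (hn : ∀ j, 1 ≤ n j)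
    (l : ℝ) (hl : 0 < l)
    (c : Fin (2 * m) → ℝ) (hc : ∀ i, c i < 0) (hcsum : ∑ i, c i = -l)
    (A : (Fin (2 * m) → Fin d) → ℝ) (K : ℝ)
    (hK : ∀ (i : Fin (2 * m)) (j : Fin d),
      ∑ f ∈ Finset.univ.filter (fun f : Fin (2 * m) → Fin d => f i = j), |A f| ≤ K) :
    |∑ f : Fin (2 * m) → Fin d, (∏ i, n (f i) ^ (c i)) * A f|
      ≤ K * ∑ j, n j ^ (-l) := by
  have hl0 : (-l) ≠ 0 := by linarith
  set w : Fin (2 * m) → ℝ := fun i => c i / (-l) with hwdef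
  have hwpos : ∀ i, 0 ≤ w i := fun i =>
    le_of_lt (div_pos_iff.mpr (Or.inr ⟨hc i, by linarith⟩))
  have hwsum : ∑ i, w i = 1 := by
    rw [hwdef, ← Finset.sum_div, hcsum]
    field_simp
  have hnpos : ∀ j, 0 < n j := fun j => lt_of_lt_of_le one_pos (hn j)
  have key : ∀ f : Fin (2 * m) → Fin d,
      ∏ i, n (f i) ^ (c i) ≤ ∑ i, w i * n (f i) ^ (-l) := by
    intro f
    have h := Real.geom_mean_le_arith_mean_weighted Finset.univ w
      (fun i => n (f i) ^ (-l)) (fun i _ => hwpos i) hwsum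
      (fun i _ => Real.rpow_nonneg (hnpos (f i)).le _)
    refine le_trans (le_of_eq (Finset.prod_congr rfl fun i _ => ?_)) h
    rw [← Real.rpow_mul (hnpos (f i)).le]
    congr 1
    field_simp [hwdef]
    rw [show w i = c i / -l from rfl]; field_simp
  calc |∑ f : Fin (2 * m) → Fin d, (∏ i, n (f i) ^ (c i)) * A f|
      ≤ ∑ f : Fin (2 * m) → Fin d, |(∏ i, n (f i) ^ (c i)) * A f| :=
        Finset.abs_sum_le_sum_abs _ _
    _ = ∑ f : Fin (2 * m) → Fin d, (∏ i, n (f i) ^ (c i)) * |A f| := by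
        refine Finset.sum_congr rfl fun f _ => ?_
        rw [abs_mul, abs_of_nonneg
          (Finset.prod_nonneg fun i _ => Real.rpow_nonneg (hnpos (f i)).le _)]
    _ ≤ ∑ f : Fin (2 * m) → Fin d, (∑ i, w i * n (f i) ^ (-l)) * |A f| :=
        Finset.sum_le_sum fun f _ =>
          mul_le_mul_of_nonneg_right (key f) (abs_nonneg _)
    _ = ∑ i, w i * ∑ f : Fin (2 * m) → Fin d, n (f i) ^ (-l) * |A f| := by
        simp_rw [Finset.sum_mul, Finset.mul_sum, mul_assoc]
        exact Finset.sum_comm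
    _ ≤ ∑ i, w i * (K * ∑ j, n j ^ (-l)) := by
        refine Finset.sum_le_sum fun i _ => mul_le_mul_of_nonneg_left ?_ (hwpos i)
        have : ∑ f : Fin (2 * m) → Fin d, n (f i) ^ (-l) * |A f|
            = ∑ j, ∑ f ∈ Finset.univ.filter
                (fun f : Fin (2 * m) → Fin d => f i = j), n (f i) ^ (-l) * |A f| := by
          exact (Finset.sum_fiberwise Finset.univ (fun f => f i)
            (fun f => n (f i) ^ (-l) * |A f|)).symm
        rw [this, mul_comm K, Finset.sum_mul]
        refine Finset.sum_le_sum fun j _ => ?_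
        have h1 : ∑ f ∈ Finset.univ.filter
              (fun f : Fin (2 * m) → Fin d => f i = j), n (f i) ^ (-l) * |A f|
            = n j ^ (-l) * ∑ f ∈ Finset.univ.filter
              (fun f : Fin (2 * m) → Fin d => f i = j), |A f| := by
          rw [Finset.mul_sum]
          refine Finset.sum_congr rfl fun f hf => ?_
          rw [(Finset.mem_filter.mp hf).2]
        rw [h1]
        exact mul_le_mul_of_nonneg_left (hK i j) (Real.rpow_nonneg (hnpos j).le _)
    _ = K * ∑ j, n j ^ (-l) := by
        rw [← Finset.sum_mul, hwsum, one_mul]
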